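/- Let k be a field, n ≥ 2, λ₁,…,λₙ pairwise distinct nonzero elements of k, X = (k^n, k^n; id, diag(λᵢ), cyclic shift) and Y = (k, k; 1, 0, 0) as representations of the 3-Kronecker quiver. Then Ext¹(Y, X) has k-dimension n. -/

import Mathlib

/- dim Ext¹(Y, X) = n for X = (k^n,k^n; id, diag(λᵢ), cyclic shift), Y = (k,k;1,0,0).
   Ext¹(Y,X) is computed as the cokernel of
   Φ : X₁ ⊕ X₂ → X₂³, (v,w) ↦ (α(v) − w, β(v), γ(v)). -/

def kroneckerBeta (k : Type) [Field k] (n : ℕ) (l : Fin n → k) :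
    (Fin n → k) →ₗ[k] (Fin n → k) where
  toFun v i := l i * v i
  map_add' u v := by funext i; simp [mul_add]
  map_smul' c v := by funext i; simp; ring

def kroneckerGamma (k : Type) [Field k] (n : ℕ) :
    (Fin n → k) →ₗ[k] (Fin n → k) where
  toFun v i := v ((finRotate n).symm i)
  map_add' u v := rfl
  map_smul' c v := rfl

/-- The map whose cokernel is Ext¹(Y, X): (v, w) ↦ (v − w, β v, γ v). -/
noncomputable def extMap (k : Type) [Field k] (n : ℕ) (l : Fin n → k) :
    ((Fin n → k) × (Fin n → k)) →ₗ[k] ((Fin n → k) × (Fin n → k) × (Fin n → k)) :=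
  (LinearMap.fst k (Fin n → k) (Fin n → k) - LinearMap.snd k (Fin n → k) (Fin n → k)).prod
    (((kroneckerBeta k n l).comp (LinearMap.fst k (Fin n → k) (Fin n → k))).prod
      ((kroneckerGamma k n).comp (LinearMap.fst k (Fin n → k) (Fin n → k))))

theorem stmt3 (k : Type) [Field k] (n : ℕ) (hn : 2 ≤ n) (l : Fin n → k)
    (hne : ∀ i, l i ≠ 0) (hinj : Function.Injective l) :
    Module.finrank k
      (((Fin n → k) × (Fin n → k) × (Fin n → k)) ⧸ LinearMap.range (extMap k n l)) = n := by
  have hinj' : Function.Injective (extMap k n l) := by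
    rw [← LinearMap.ker_eq_bot, LinearMap.ker_eq_bot']
    rintro ⟨v, w⟩ h
    simp only [extMap, LinearMap.prod_apply, LinearMap.comp_apply, LinearMap.sub_apply,
      LinearMap.fst_apply, LinearMap.snd_apply, Function.prod, Prod.mk_eq_zero] at h
    obtain ⟨h1, h2, h3⟩ := h
    have hv : v = 0 := by
      funext i
      have := congrFun h3 (finRotate n i)
      simp only [kroneckerGamma, LinearMap.coe_mk, AddHom.coe_mk, Equiv.symm_apply_apply] at this
      simpa using this
    have hw : w = 0 := by rw [hv, sub_eq_zero] at h1; exact h1.symm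
    simp [hv, hw]
  have hrange : Module.finrank k (LinearMap.range (extMap k n l)) = n + n := by
    rw [LinearMap.finrank_range_of_inj hinj']
    simp [Module.finrank_prod]
  have := Submodule.finrank_quotient_add_finrank (LinearMap.range (extMap k n l))
  rw [hrange] at this
  have htot : Module.finrank k ((Fin n → k) × (Fin n → k) × (Fin n → k)) = n + n + n := by
    simp [Module.finrank_prod]; ring
  omega
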